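/- Let P, Q ∈ S^d₊, Γ ∈ S^k₊₊, and H ∈ ℝ^{k×d}. Then the Kalman gain operator satisfies |𝒦(Q) − 𝒦(P)| ≤ |Q − P| · |H| · |Γ⁻¹| · (1 + min(|P|, |Q|) · |H|² · |Γ⁻¹|). -/

import Mathlib

open MeasureTheory ProbabilityTheory Matrix
open scoped BigOperators

noncomputable section

/-- Euclidean norm of a vector `x ∈ ℝ^d`. -/
def vecNorm {d : ℕ} (x : Fin d → ℝ) : ℝ := Real.sqrt (∑ i, x i ^ 2)

/-- Operator (spectral) norm of a matrix, viewed as a linear map between Euclidean spaces. -/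
def opNorm {m n : ℕ} (M : Matrix (Fin m) (Fin n) ℝ) : ℝ :=
  ‖LinearMap.toContinuousLinearMap (Matrix.toEuclideanLin M)‖

/-- Effective dimension `r₂(Q) = Tr(Q)/|Q|`. -/
def effDim {d : ℕ} (Q : Matrix (Fin d) (Fin d) ℝ) : ℝ := Q.trace / opNorm Q

/-- `L^q` norm `(E |X|^q)^{1/q}` of a real random variable. -/
def LqNorm {Ω : Type*} [MeasurableSpace Ω] (P : Measure Ω) (q : ℝ) (X : Ω → ℝ) : ℝ :=
  (∫ ω, |X ω| ^ q ∂P) ^ (1 / q)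

/-- A random vector `X` is Gaussian with mean `m` and covariance `S`:
every linear functional of it is a real Gaussian with the corresponding parameters. -/
def IsGaussianVec {Ω : Type*} [MeasurableSpace Ω] {d : ℕ} (P : Measure Ω)
    (X : Ω → Fin d → ℝ) (m : Fin d → ℝ) (S : Matrix (Fin d) (Fin d) ℝ) : Prop :=
  ∀ v : Fin d → ℝ,
    P.map (fun ω => v ⬝ᵥ X ω)
      = gaussianReal (v ⬝ᵥ m) (Real.toNNReal (v ⬝ᵥ S.mulVec v))

/-- Sample mean of an ensemble of vectors. -/
def sampleMean {N d : ℕ} (v : Fin N → Fin d → ℝ) : Fin d → ℝ := (N : ℝ)⁻¹ • ∑ n, v n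

/-- `1/(N-1)`-normalized sample covariance of an ensemble of vectors. -/
def sampleCov {N d : ℕ} (v : Fin N → Fin d → ℝ) : Matrix (Fin d) (Fin d) ℝ :=
  ((N : ℝ) - 1)⁻¹ • ∑ n, vecMulVec (v n - sampleMean v) (v n - sampleMean v)

/-- `1/(N-1)`-normalized sample cross-covariance of two ensembles of vectors. -/
def sampleCrossCov {N d k : ℕ} (v : Fin N → Fin d → ℝ) (w : Fin N → Fin k → ℝ) :
    Matrix (Fin d) (Fin k) ℝ :=
  ((N : ℝ) - 1)⁻¹ • ∑ n, vecMulVec (v n - sampleMean v) (w n - sampleMean w)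

/-- Kalman gain operator `𝒦(C) = C Hᵀ (H C Hᵀ + Γ)⁻¹`. -/
def kGain {d k : ℕ} (H : Matrix (Fin k) (Fin d) ℝ) (Γ : Matrix (Fin k) (Fin k) ℝ)
    (C : Matrix (Fin d) (Fin d) ℝ) : Matrix (Fin d) (Fin k) ℝ :=
  C * Hᵀ * (H * C * Hᵀ + Γ)⁻¹

/-- Mean-update operator `ℳ(m, C; y) = m + 𝒦(C)(y − Hm)`. -/
def meanUpdate {d k : ℕ} (H : Matrix (Fin k) (Fin d) ℝ) (Γ : Matrix (Fin k) (Fin k) ℝ)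
    (m : Fin d → ℝ) (C : Matrix (Fin d) (Fin d) ℝ) (y : Fin k → ℝ) : Fin d → ℝ :=
  m + (kGain H Γ C).mulVec (y - H.mulVec m)

/-- Covariance-update operator `𝒞(C) = (I − 𝒦(C)H)C`. -/
def covUpdate {d k : ℕ} (H : Matrix (Fin k) (Fin d) ℝ) (Γ : Matrix (Fin k) (Fin k) ℝ)
    (C : Matrix (Fin d) (Fin d) ℝ) : Matrix (Fin d) (Fin d) ℝ :=
  (1 - kGain H Γ C * H) * C

/-- Kalman filter: `(KF ... j).1` is the analysis mean `μ⁽ʲ⁾` and `(KF ... j).2` the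
analysis covariance `Σ⁽ʲ⁾`. -/
def KF {d k : ℕ} (A : Matrix (Fin d) (Fin d) ℝ) (H : Matrix (Fin k) (Fin d) ℝ)
    (Ξ : Matrix (Fin d) (Fin d) ℝ) (Γ : Matrix (Fin k) (Fin k) ℝ)
    (μ0 : Fin d → ℝ) (S0 : Matrix (Fin d) (Fin d) ℝ) (y : ℕ → Fin k → ℝ) :
    ℕ → (Fin d → ℝ) × Matrix (Fin d) (Fin d) ℝ
  | 0 => (μ0, S0)
  | j + 1 =>
      let prev := KF A H Ξ Γ μ0 S0 y j
      let m := A.mulVec prev.1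
      let C := A * prev.2 * Aᵀ + Ξ
      (meanUpdate H Γ m C (y (j + 1)), covUpdate H Γ C)

-- Positive-semidefinite square root (junk value `0` off the psd matrices).
open Classical in
def matSqrt {d : ℕ} (S : Matrix (Fin d) (Fin d) ℝ) : Matrix (Fin d) (Fin d) ℝ :=
  if h : S.PosSemidef then
    (h.1.eigenvectorUnitary : Matrix (Fin d) (Fin d) ℝ) *
      diagonal ((↑) ∘ (√·) ∘ h.1.eigenvalues) * (star h.1.eigenvectorUnitary : Matrix (Fin d) (Fin d) ℝ)
  else 0

/-- The stochastic (perturbed-observation) REnKF, driven by the noise arrays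
`Z` (resampling, standard Gaussian), `ξ` (dynamics noise) and `η` (observation noise):
`(REnKF ... j ω).1 = μ̂⁽ʲ⁾(ω)` and `(REnKF ... j ω).2 = Σ̂⁽ʲ⁾(ω)`.
The resampled ensemble at time `j` is `μ̂⁽ʲ⁾ + Σ̂⁽ʲ⁾^{1/2} Z⁽ʲ⁺¹⁾ₙ`, which realizes
i.i.d. `N(μ̂⁽ʲ⁾, Σ̂⁽ʲ⁾)` draws conditionally on the past. -/
def REnKF {Ω : Type*} {d k N : ℕ} (A : Matrix (Fin d) (Fin d) ℝ) (H : Matrix (Fin k) (Fin d) ℝ)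
    (Γ : Matrix (Fin k) (Fin k) ℝ) (μ0 : Fin d → ℝ) (S0 : Matrix (Fin d) (Fin d) ℝ)
    (y : ℕ → Fin k → ℝ)
    (Z ξ : ℕ → Fin N → Ω → Fin d → ℝ) (η : ℕ → Fin N → Ω → Fin k → ℝ) :
    ℕ → Ω → (Fin d → ℝ) × Matrix (Fin d) (Fin d) ℝ
  | 0 => fun _ => (μ0, S0)
  | j + 1 => fun ω =>
      let prev := REnKF A H Γ μ0 S0 y Z ξ η j ω
      let uhat : Fin N → Fin d → ℝ :=
        fun n => A.mulVec (prev.1 + (matSqrt prev.2).mulVec (Z (j + 1) n ω)) + ξ (j + 1) n ω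
      let K := kGain H Γ (sampleCov uhat)
      let u' : Fin N → Fin d → ℝ :=
        fun n => (1 - K * H).mulVec (uhat n) + K.mulVec (y (j + 1) + η (j + 1) n ω)
      (sampleMean u', sampleCov u')

/-- Index type for the three mutually independent noise arrays. -/
def NoiseType (d k N : ℕ) : (ℕ × Fin N) ⊕ ((ℕ × Fin N) ⊕ (ℕ × Fin N)) → Type
  | Sum.inl _ => Fin d → ℝ
  | Sum.inr (Sum.inl _) => Fin d → ℝ
  | Sum.inr (Sum.inr _) => Fin k → ℝ

def noiseσ (d k N : ℕ) : ∀ i, MeasurableSpace (NoiseType d k N i)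
  | Sum.inl _ => (inferInstance : MeasurableSpace (Fin d → ℝ))
  | Sum.inr (Sum.inl _) => (inferInstance : MeasurableSpace (Fin d → ℝ))
  | Sum.inr (Sum.inr _) => (inferInstance : MeasurableSpace (Fin k → ℝ))

/-- The three noise arrays, bundled as a single indexed family of random variables. -/
def noiseFun {Ω : Type*} {d k N : ℕ} (Z ξ : ℕ → Fin N → Ω → Fin d → ℝ)
    (η : ℕ → Fin N → Ω → Fin k → ℝ) : ∀ i, Ω → NoiseType d k N i
  | Sum.inl p => Z p.1 p.2
  | Sum.inr (Sum.inl p) => ξ p.1 p.2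
  | Sum.inr (Sum.inr p) => η p.1 p.2

section KGAux
open scoped Matrix.Norms.L2Operator
variable {m n k d : ℕ}




lemma dp_self_eq (x : Fin n → ℝ) :
    x ⬝ᵥ x = ‖(WithLp.equiv 2 (Fin n → ℝ)).symm x‖ ^ 2 := by
  rw [← real_inner_self_eq_norm_sq, WithLp.equiv_symm_apply, EuclideanSpace.inner_toLp_toLp]
  simp [dotProduct]

lemma dp_le_norm (x y : Fin n → ℝ) :
    x ⬝ᵥ y ≤ ‖(WithLp.equiv 2 (Fin n → ℝ)).symm x‖ * ‖(WithLp.equiv 2 (Fin n → ℝ)).symm y‖ := by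
  have := real_inner_le_norm ((WithLp.equiv 2 (Fin n → ℝ)).symm x) ((WithLp.equiv 2 (Fin n → ℝ)).symm y)
  rwa [WithLp.equiv_symm_apply, EuclideanSpace.inner_toLp_toLp, star_trivial, dotProduct_comm] at this

lemma norm_mulVec_le (A : Matrix (Fin m) (Fin n) ℝ) (x : Fin n → ℝ) :
    ‖(WithLp.equiv 2 (Fin m → ℝ)).symm (A *ᵥ x)‖ ≤ ‖A‖ * ‖(WithLp.equiv 2 (Fin n → ℝ)).symm x‖ :=
  A.l2_opNorm_mulVec ((WithLp.equiv 2 (Fin n → ℝ)).symm x)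

lemma dp_symm_mulVec {M : Matrix (Fin n) (Fin n) ℝ} (hM : Mᵀ = M) (x y : Fin n → ℝ) :
    x ⬝ᵥ (M *ᵥ y) = (M *ᵥ x) ⬝ᵥ y := by
  rw [dotProduct_mulVec, ← hM, vecMul_transpose, hM]





lemma transpose_eq_of_posSemidef {M : Matrix (Fin n) (Fin n) ℝ} (hM : M.PosSemidef) :
    Mᵀ = M := by
  have := hM.1
  rwa [Matrix.IsHermitian, conjTranspose_eq_transpose_of_trivial] at this

open scoped MatrixOrder in
lemma rayleigh_ge {Γ : Matrix (Fin k) (Fin k) ℝ} (hΓ : Γ.PosDef) (x : Fin k → ℝ) :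
    x ⬝ᵥ x ≤ ‖Γ⁻¹‖ * (x ⬝ᵥ (Γ *ᵥ x)) := by
  set R := CFC.sqrt Γ with hRdef
  have hR : R.PosSemidef := (CFC.sqrt_nonneg Γ).posSemidef
  have hRT : Rᵀ = R := transpose_eq_of_posSemidef hR
  have hRR : R * R = Γ := CFC.sqrt_mul_sqrt_self Γ hΓ.posSemidef.nonneg
  have hdet : IsUnit R.det := by
    have hΓdet : Γ.det ≠ 0 := hΓ.det_pos.ne'
    rw [← hRR, det_mul] at hΓdet
    exact isUnit_iff_ne_zero.2 (left_ne_zero_of_mul hΓdet)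
  have hRinv : R * R⁻¹ = 1 := mul_nonsing_inv R hdet
  have hRinvT : (R⁻¹)ᵀ = R⁻¹ := by rw [transpose_nonsing_inv, hRT]
  have hΓinv : R⁻¹ * R⁻¹ = Γ⁻¹ := by rw [← Matrix.mul_inv_rev, hRR]
  set u := R *ᵥ x with hu
  set w := R⁻¹ *ᵥ x with hw
  have huw : u ⬝ᵥ w = x ⬝ᵥ x := by
    rw [hu, ← dp_symm_mulVec hRT, hw, mulVec_mulVec, hRinv, one_mulVec]
  have huu : u ⬝ᵥ u = x ⬝ᵥ (Γ *ᵥ x) := by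
    rw [hu, ← dp_symm_mulVec hRT, mulVec_mulVec, hRR]
  have hww : w ⬝ᵥ w = x ⬝ᵥ (Γ⁻¹ *ᵥ x) := by
    rw [hw, ← dp_symm_mulVec hRinvT, mulVec_mulVec, hΓinv]
  have hCS : (u ⬝ᵥ w) ^ 2 ≤ (u ⬝ᵥ u) * (w ⬝ᵥ w) := by
    have := Finset.sum_mul_sq_le_sq_mul_sq Finset.univ u w
    simpa [dotProduct, sq, Finset.mul_sum] using this
  have hG : 0 ≤ x ⬝ᵥ (Γ *ᵥ x) := by
    have := hΓ.posSemidef.dotProduct_mulVec_nonneg x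
    simpa using this
  have hGi : x ⬝ᵥ (Γ⁻¹ *ᵥ x) ≤ ‖Γ⁻¹‖ * (x ⬝ᵥ x) := by
    calc x ⬝ᵥ (Γ⁻¹ *ᵥ x)
        ≤ ‖(WithLp.equiv 2 (Fin k → ℝ)).symm x‖ * ‖(WithLp.equiv 2 (Fin k → ℝ)).symm (Γ⁻¹ *ᵥ x)‖ := by
          exact dp_le_norm _ _
      _ ≤ ‖(WithLp.equiv 2 (Fin k → ℝ)).symm x‖ * (‖Γ⁻¹‖ * ‖(WithLp.equiv 2 (Fin k → ℝ)).symm x‖) := by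
          have h := norm_mulVec_le Γ⁻¹ x
          have h2 : (0:ℝ) ≤ ‖(WithLp.equiv 2 (Fin k → ℝ)).symm x‖ := norm_nonneg _
          nlinarith [h, h2]
      _ = ‖Γ⁻¹‖ * (x ⬝ᵥ x) := by rw [dp_self_eq]; ring
  have hxx : 0 ≤ x ⬝ᵥ x := by rw [dp_self_eq]; positivity
  have key : (x ⬝ᵥ x) ^ 2 ≤ (x ⬝ᵥ (Γ *ᵥ x)) * (‖Γ⁻¹‖ * (x ⬝ᵥ x)) := by
    calc (x ⬝ᵥ x) ^ 2 = (u ⬝ᵥ w) ^ 2 := by rw [huw]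
      _ ≤ (u ⬝ᵥ u) * (w ⬝ᵥ w) := hCS
      _ = (x ⬝ᵥ (Γ *ᵥ x)) * (x ⬝ᵥ (Γ⁻¹ *ᵥ x)) := by rw [huu, hww]
      _ ≤ (x ⬝ᵥ (Γ *ᵥ x)) * (‖Γ⁻¹‖ * (x ⬝ᵥ x)) := by gcongr
  rcases eq_or_lt_of_le hxx with h0 | h0
  · rw [← h0]
    positivity
  · nlinarith [key, h0]





lemma norm_inv_add_le {S Γ : Matrix (Fin k) (Fin k) ℝ} (hS : S.PosSemidef) (hΓ : Γ.PosDef) :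
    ‖(S + Γ)⁻¹‖ ≤ ‖Γ⁻¹‖ := by
  set M := S + Γ with hMdef
  have hM : M.PosDef := Matrix.PosDef.posSemidef_add hS hΓ
  have hdet : IsUnit M.det := isUnit_iff_ne_zero.2 hM.det_pos.ne'
  rw [Matrix.l2_opNorm_def]
  refine ContinuousLinearMap.opNorm_le_bound _ (norm_nonneg _) fun y => ?_
  set yv : Fin k → ℝ := WithLp.equiv 2 (Fin k → ℝ) y with hyv
  set x : Fin k → ℝ := M⁻¹ *ᵥ yv with hx
  have happ : (Matrix.toEuclideanLin.trans LinearMap.toContinuousLinearMap M⁻¹) y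
      = (WithLp.equiv 2 (Fin k → ℝ)).symm x := by
    simp [Matrix.toEuclideanLin_apply, hx, hyv]
  rw [happ]
  have hMx : M *ᵥ x = yv := by
    rw [hx, mulVec_mulVec, Matrix.mul_nonsing_inv _ hdet, one_mulVec]
  have h1 : x ⬝ᵥ x ≤ ‖Γ⁻¹‖ * (x ⬝ᵥ (M *ᵥ x)) := by
    have hray := rayleigh_ge hΓ x
    have hSx : 0 ≤ x ⬝ᵥ (S *ᵥ x) := by simpa using hS.dotProduct_mulVec_nonneg x
    have : x ⬝ᵥ (M *ᵥ x) = x ⬝ᵥ (S *ᵥ x) + x ⬝ᵥ (Γ *ᵥ x) := by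
      rw [hMdef, add_mulVec, dotProduct_add]
    nlinarith [norm_nonneg Γ⁻¹]
  have h2 : x ⬝ᵥ (M *ᵥ x) ≤ ‖(WithLp.equiv 2 (Fin k → ℝ)).symm x‖ * ‖y‖ := by
    rw [hMx]
    have := dp_le_norm x yv
    simpa [hyv] using this
  have hxn : (0:ℝ) ≤ ‖(WithLp.equiv 2 (Fin k → ℝ)).symm x‖ := norm_nonneg _
  have hxx : x ⬝ᵥ x = ‖(WithLp.equiv 2 (Fin k → ℝ)).symm x‖ ^ 2 := dp_self_eq x
  rcases eq_or_lt_of_le hxn with h0 | h0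
  · rw [← h0]
    positivity
  · nlinarith [h1, h2, norm_nonneg y, norm_nonneg Γ⁻¹]






lemma hermitian_sandwich {P : Matrix (Fin d) (Fin d) ℝ} (hP : P.PosSemidef)
    (H : Matrix (Fin k) (Fin d) ℝ) : (H * P * Hᵀ).PosSemidef := by
  have := hP.mul_mul_conjTranspose_same H
  rwa [conjTranspose_eq_transpose_of_trivial] at this

lemma norm_transpose_eq (H : Matrix (Fin k) (Fin d) ℝ) : ‖Hᵀ‖ = ‖H‖ := by
  rw [← conjTranspose_eq_transpose_of_trivial, Matrix.l2_opNorm_conjTranspose]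

set_option maxHeartbeats 1000000 in
lemma kGain_lipschitz_one (P Q : Matrix (Fin d) (Fin d) ℝ)
    (hP : P.PosSemidef) (hQ : Q.PosSemidef)
    (Γ : Matrix (Fin k) (Fin k) ℝ) (hΓ : Γ.PosDef) (H : Matrix (Fin k) (Fin d) ℝ) :
    ‖kGain H Γ Q - kGain H Γ P‖
      ≤ ‖Q - P‖ * ‖H‖ * ‖Γ⁻¹‖ * (1 + ‖P‖ * ‖H‖ ^ 2 * ‖Γ⁻¹‖) := by
  set Sp := H * P * Hᵀ + Γ with hSpdef
  set Sq := H * Q * Hᵀ + Γ with hSqdef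
  have hSp : Sp.PosDef := Matrix.PosDef.posSemidef_add (hermitian_sandwich hP H) hΓ
  have hSq : Sq.PosDef := Matrix.PosDef.posSemidef_add (hermitian_sandwich hQ H) hΓ
  have hp : Sp⁻¹ * Sp = 1 := Matrix.nonsing_inv_mul _ (isUnit_iff_ne_zero.2 hSp.det_pos.ne')
  have hq : Sq * Sq⁻¹ = 1 := Matrix.mul_nonsing_inv _ (isUnit_iff_ne_zero.2 hSq.det_pos.ne')
  have hdiff : Sq - Sp = H * (Q - P) * Hᵀ := by
    rw [hSpdef, hSqdef, Matrix.mul_sub, Matrix.sub_mul]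
    abel
  have hmid : Sp⁻¹ * (H * (Q - P) * Hᵀ) * Sq⁻¹ = Sp⁻¹ - Sq⁻¹ := by
    rw [← hdiff]
    calc Sp⁻¹ * (Sq - Sp) * Sq⁻¹ = Sp⁻¹ * (Sq * Sq⁻¹) - Sp⁻¹ * Sp * Sq⁻¹ := by noncomm_ring
      _ = Sp⁻¹ - Sq⁻¹ := by rw [hq, hp, Matrix.mul_one, Matrix.one_mul]
  have hiden : kGain H Γ Q - kGain H Γ P
      = (Q - P) * Hᵀ * Sq⁻¹ - P * Hᵀ * (Sp⁻¹ * (H * (Q - P) * Hᵀ) * Sq⁻¹) := by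
    rw [hmid]
    simp only [kGain, ← hSpdef, ← hSqdef, Matrix.sub_mul, Matrix.mul_sub]
    abel
  have hSpinv : ‖Sp⁻¹‖ ≤ ‖Γ⁻¹‖ := norm_inv_add_le (hermitian_sandwich hP H) hΓ
  have hSqinv : ‖Sq⁻¹‖ ≤ ‖Γ⁻¹‖ := norm_inv_add_le (hermitian_sandwich hQ H) hΓ
  have hHT : ‖Hᵀ‖ = ‖H‖ := norm_transpose_eq H
  have t1 : ‖(Q - P) * Hᵀ * Sq⁻¹‖ ≤ ‖Q - P‖ * ‖H‖ * ‖Γ⁻¹‖ := by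
    calc ‖(Q - P) * Hᵀ * Sq⁻¹‖ ≤ ‖(Q - P) * Hᵀ‖ * ‖Sq⁻¹‖ := Matrix.l2_opNorm_mul _ _
      _ ≤ (‖Q - P‖ * ‖Hᵀ‖) * ‖Γ⁻¹‖ := by
          gcongr
          · exact Matrix.l2_opNorm_mul _ _
      _ = ‖Q - P‖ * ‖H‖ * ‖Γ⁻¹‖ := by rw [hHT]
  have tm : ‖H * (Q - P) * Hᵀ‖ ≤ ‖H‖ * ‖Q - P‖ * ‖H‖ := by
    calc ‖H * (Q - P) * Hᵀ‖ ≤ ‖H * (Q - P)‖ * ‖Hᵀ‖ := Matrix.l2_opNorm_mul _ _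
      _ ≤ (‖H‖ * ‖Q - P‖) * ‖Hᵀ‖ := by
          gcongr
          exact Matrix.l2_opNorm_mul _ _
      _ = ‖H‖ * ‖Q - P‖ * ‖H‖ := by rw [hHT]
  have t2 : ‖P * Hᵀ * (Sp⁻¹ * (H * (Q - P) * Hᵀ) * Sq⁻¹)‖
      ≤ ‖P‖ * ‖H‖ * (‖Γ⁻¹‖ * (‖H‖ * ‖Q - P‖ * ‖H‖) * ‖Γ⁻¹‖) := by
    calc ‖P * Hᵀ * (Sp⁻¹ * (H * (Q - P) * Hᵀ) * Sq⁻¹)‖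
        ≤ ‖P * Hᵀ‖ * ‖Sp⁻¹ * (H * (Q - P) * Hᵀ) * Sq⁻¹‖ := Matrix.l2_opNorm_mul _ _
      _ ≤ (‖P‖ * ‖Hᵀ‖) * (‖Sp⁻¹ * (H * (Q - P) * Hᵀ)‖ * ‖Sq⁻¹‖) := by
          gcongr
          · exact Matrix.l2_opNorm_mul _ _
          · exact Matrix.l2_opNorm_mul _ _
      _ ≤ (‖P‖ * ‖Hᵀ‖) * ((‖Sp⁻¹‖ * ‖H * (Q - P) * Hᵀ‖) * ‖Γ⁻¹‖) := by
          gcongr (‖P‖ * ‖Hᵀ‖) * ?_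
          exact mul_le_mul (Matrix.l2_opNorm_mul _ _) hSqinv (norm_nonneg _) (by positivity)
      _ ≤ (‖P‖ * ‖Hᵀ‖) * ((‖Γ⁻¹‖ * (‖H‖ * ‖Q - P‖ * ‖H‖)) * ‖Γ⁻¹‖) := by
          gcongr
      _ = ‖P‖ * ‖H‖ * (‖Γ⁻¹‖ * (‖H‖ * ‖Q - P‖ * ‖H‖) * ‖Γ⁻¹‖) := by rw [hHT]
  calc ‖kGain H Γ Q - kGain H Γ P‖
      ≤ ‖(Q - P) * Hᵀ * Sq⁻¹‖ + ‖P * Hᵀ * (Sp⁻¹ * (H * (Q - P) * Hᵀ) * Sq⁻¹)‖ := by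
        rw [hiden]; exact norm_sub_le _ _
    _ ≤ ‖Q - P‖ * ‖H‖ * ‖Γ⁻¹‖ + ‖P‖ * ‖H‖ * (‖Γ⁻¹‖ * (‖H‖ * ‖Q - P‖ * ‖H‖) * ‖Γ⁻¹‖) :=
        add_le_add t1 t2
    _ = ‖Q - P‖ * ‖H‖ * ‖Γ⁻¹‖ * (1 + ‖P‖ * ‖H‖ ^ 2 * ‖Γ⁻¹‖) := by ring


lemma kGain_lipschitz_min {d k : ℕ} (P Q : Matrix (Fin d) (Fin d) ℝ)
    (hP : P.PosSemidef) (hQ : Q.PosSemidef)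
    (Γ : Matrix (Fin k) (Fin k) ℝ) (hΓ : Γ.PosDef) (H : Matrix (Fin k) (Fin d) ℝ) :
    ‖kGain H Γ Q - kGain H Γ P‖
      ≤ ‖Q - P‖ * ‖H‖ * ‖Γ⁻¹‖ * (1 + min ‖P‖ ‖Q‖ * ‖H‖ ^ 2 * ‖Γ⁻¹‖) := by
  rcases le_total ‖P‖ ‖Q‖ with h | h
  · rw [min_eq_left h]
    exact kGain_lipschitz_one P Q hP hQ Γ hΓ H
  · rw [min_eq_right h]
    have h2 := kGain_lipschitz_one Q P hQ hP Γ hΓ H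
    rwa [norm_sub_rev (kGain H Γ P), norm_sub_rev P] at h2

end KGAux

/-- **Lipschitz property of the Kalman gain operator**. -/
theorem kalman_gain_lipschitz (d k : ℕ) (P Q : Matrix (Fin d) (Fin d) ℝ)
    (hP : P.PosSemidef) (hQ : Q.PosSemidef)
    (Γ : Matrix (Fin k) (Fin k) ℝ) (hΓ : Γ.PosDef) (H : Matrix (Fin k) (Fin d) ℝ) :
    opNorm (kGain H Γ Q - kGain H Γ P)
      ≤ opNorm (Q - P) * opNorm H * opNorm Γ⁻¹
        * (1 + min (opNorm P) (opNorm Q) * opNorm H ^ 2 * opNorm Γ⁻¹) :=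
  kGain_lipschitz_min P Q hP hQ Γ hΓ H

end
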